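/- arXiv:1309.7268 — 2 statements merged into one kernel-verified Lean document; each statement's English description precedes it below -/
import Mathlib

section
/- Let n ≥ 1 and let a_1,…,a_n and b_1,…,b_n be positive reals satisfying the telescoping condition a_{i+1} = a_i + b_i for 1 ≤ i ≤ n−1. If X_1,…,X_n are independent random variables with X_i having the Beta(a_i, b_i) distribution, then the product ∏_{i=1}^n X_i has the Beta(a_1, b_1 + b_2 + ⋯ + b_n) distribution. -/
open MeasureTheory ProbabilityTheory Real Filter Finset

/-- The Beta(a,b) distribution on ℝ: density x^(a-1)(1-x)^(b-1)/B(a,b) on (0,1),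
where B(a,b) = Γ(a)Γ(b)/Γ(a+b). -/
noncomputable def betaMeasure (a b : ℝ) : Measure ℝ :=
  volume.withDensity fun x =>
    ENNReal.ofReal (if x ∈ Set.Ioo (0 : ℝ) 1 then
      x ^ (a - 1) * (1 - x) ^ (b - 1) / (Real.Gamma a * Real.Gamma b / Real.Gamma (a + b))
    else 0)

/-- `X` has the Beta(a,b) distribution under `P`. -/
def HasBetaDist {Ω : Type*} [MeasurableSpace Ω] (P : Measure Ω) (X : Ω → ℝ) (a b : ℝ) : Prop :=
  Measurable X ∧ Measure.map X P = _root_.betaMeasure a b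

section BetaAux
open Set
open scoped ENNReal

noncomputable def Bfun (a b : ℝ) : ℝ := Real.Gamma a * Real.Gamma b / Real.Gamma (a + b)

lemma Bfun_pos {a b : ℝ} (ha : 0 < a) (hb : 0 < b) : 0 < Bfun a b :=
  div_pos (mul_pos (Real.Gamma_pos_of_pos ha) (Real.Gamma_pos_of_pos hb))
    (Real.Gamma_pos_of_pos (by linarith))

lemma intervalIntegrable_beta {b c : ℝ} (hb : 0 < b) (hc : 0 < c) {A : ℝ} (hA : 0 < A) :
    IntervalIntegrable (fun t => t ^ (b-1) * (A - t) ^ (c-1)) volume 0 A := by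
  have h1 : IntervalIntegrable (fun t => t ^ (b-1) * (A - t) ^ (c-1)) volume 0 (A/2) := by
    apply (intervalIntegral.intervalIntegrable_rpow' (by linarith)).mul_continuousOn
    apply ContinuousOn.rpow_const (by fun_prop)
    intro x hx
    rw [Set.uIcc_of_le (by linarith)] at hx
    left; have := hx.2; intro h; nlinarith [hx.1, hx.2]
  have h2 : IntervalIntegrable (fun t => t ^ (b-1) * (A - t) ^ (c-1)) volume (A/2) A := by
    have base : IntervalIntegrable (fun t : ℝ => (A - t) ^ (c-1)) volume (A/2) A := by
      have := ((intervalIntegral.intervalIntegrable_rpow' (a := 0) (b := A/2) (by linarith : (-1:ℝ) < c - 1)).comp_sub_left A).symm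
      rw [show A - A/2 = A/2 by ring, sub_zero] at this
      exact this
    apply base.continuousOn_mul
    apply ContinuousOn.rpow_const (by fun_prop)
    intro x hx
    rw [Set.uIcc_of_le (by linarith)] at hx
    left; nlinarith [hx.1, hx.2]
  exact h1.trans h2

lemma real_betaIntegral {b c : ℝ} (hb : 0 < b) (hc : 0 < c) :
    ∫ x in (0:ℝ)..1, x ^ (b-1) * (1 - x) ^ (c-1) = Bfun b c := by
  have key := Complex.Gamma_mul_Gamma_eq_betaIntegral
    (s := (b:ℂ)) (t := (c:ℂ)) (by simpa using hb) (by simpa using hc)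
  have h1 : Complex.betaIntegral b c = ((∫ x in (0:ℝ)..1, x ^ (b-1) * (1 - x) ^ (c-1) : ℝ) : ℂ) := by
    rw [Complex.betaIntegral]
    rw [← intervalIntegral.integral_ofReal]
    apply intervalIntegral.integral_congr
    intro x hx
    rw [Set.uIcc_of_le (by norm_num)] at hx
    have hx0 : (0:ℝ) ≤ x := hx.1
    have hx1 : (0:ℝ) ≤ 1 - x := by linarith [hx.2]
    show _ = ((_ : ℝ) : ℂ)
    rw [Complex.ofReal_mul, Complex.ofReal_cpow hx0, Complex.ofReal_cpow hx1]
    push_cast; ring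
  rw [h1] at key
  have h2 : Complex.Gamma b = (Real.Gamma b : ℂ) := Complex.Gamma_ofReal b
  have h3 : Complex.Gamma c = (Real.Gamma c : ℂ) := Complex.Gamma_ofReal c
  have h4 : Complex.Gamma (b + c) = (Real.Gamma (b + c) : ℂ) := by
    rw [← Complex.ofReal_add]; exact Complex.Gamma_ofReal _
  have hG : Real.Gamma (b + c) ≠ 0 := (Real.Gamma_pos_of_pos (by linarith)).ne'
  rw [h2, h3] at key
  have : ((Real.Gamma b * Real.Gamma c : ℝ) : ℂ)
      = ((Real.Gamma (b+c) * ∫ x in (0:ℝ)..1, x ^ (b-1) * (1 - x) ^ (c-1) : ℝ) : ℂ) := by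
    push_cast
    rw [key, ← h4]
  have := Complex.ofReal_injective this
  have h5 : Real.Gamma b * Real.Gamma c
      = Real.Gamma (b+c) * ∫ x in (0:ℝ)..1, x ^ (b-1) * (1 - x) ^ (c-1) := this
  rw [Bfun, eq_div_iff hG, h5]; ring

lemma real_betaIntegral_scaled {b c : ℝ} (hb : 0 < b) (hc : 0 < c) {A : ℝ} (hA : 0 < A) :
    ∫ t in (0:ℝ)..A, t ^ (b-1) * (A - t) ^ (c-1) = A ^ (b+c-1) * Bfun b c := by
  have key := intervalIntegral.integral_comp_mul_right
    (a := (0:ℝ)) (b := 1) (fun t => t ^ (b-1) * (A - t) ^ (c-1)) hA.ne'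
  simp only [zero_mul, one_mul, smul_eq_mul] at key
  have h2 : ∫ x in (0:ℝ)..1, (x * A) ^ (b-1) * (A - x * A) ^ (c-1)
      = A ^ (b+c-2) * Bfun b c := by
    rw [← real_betaIntegral hb hc, ← intervalIntegral.integral_const_mul]
    apply intervalIntegral.integral_congr
    intro x hx
    rw [Set.uIcc_of_le (by norm_num)] at hx
    have hx0 : (0:ℝ) ≤ x := hx.1
    have hx1 : (0:ℝ) ≤ 1 - x := by linarith [hx.2]
    dsimp only
    have e1 : (x * A) ^ (b-1) = x ^ (b-1) * A ^ (b-1) :=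
      Real.mul_rpow hx0 hA.le
    have e2 : (A - x * A) ^ (c-1) = (1-x) ^ (c-1) * A ^ (c-1) := by
      rw [show A - x * A = (1-x) * A by ring]; exact Real.mul_rpow hx1 hA.le
    rw [e1, e2, show A ^ (b+c-2) = A ^ (b-1) * A ^ (c-1) by
      rw [← Real.rpow_add hA]; ring_nf]
    ring
  rw [h2] at key
  have hv : ∫ t in (0:ℝ)..A, t ^ (b-1) * (A - t) ^ (c-1)
      = A * (A ^ (b+c-2) * Bfun b c) := by
    rw [key]; field_simp
  rw [hv, show A ^ (b+c-1) = A * A ^ (b+c-2) by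
    rw [show b+c-1 = 1 + (b+c-2) by ring, Real.rpow_add hA, Real.rpow_one]]
  ring

lemma beta_shift_integrable {b c : ℝ} (hb : 0 < b) (hc : 0 < c) {u : ℝ} (hu1 : u < 1) :
    IntervalIntegrable (fun y => (y-u) ^ (b-1) * (1-y) ^ (c-1)) volume u 1 := by
  have h := (intervalIntegrable_beta hb hc (A := 1 - u) (by linarith)).comp_sub_right u
  rw [zero_add, sub_add_cancel] at h
  have : (fun y => (y-u) ^ (b-1) * (1-y) ^ (c-1))
      = fun y => (y-u) ^ (b-1) * ((1-u) - (y-u)) ^ (c-1) := by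
    funext y; congr 2; ring
  rw [this]; exact h

lemma beta_shift {b c : ℝ} (hb : 0 < b) (hc : 0 < c) {u : ℝ} (hu1 : u < 1) :
    ∫ y in u..1, (y-u) ^ (b-1) * (1-y) ^ (c-1) = (1-u) ^ (b+c-1) * Bfun b c := by
  have h := intervalIntegral.integral_comp_sub_right
    (a := u) (b := 1) (fun t => t ^ (b-1) * ((1-u) - t) ^ (c-1)) u
  rw [sub_self] at h
  have e : (fun y => (y-u) ^ (b-1) * (1-y) ^ (c-1))
      = fun y => (y-u) ^ (b-1) * ((1-u) - (y-u)) ^ (c-1) := by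
    funext y; congr 2; ring
  rw [e, h, real_betaIntegral_scaled hb hc (by linarith)]

noncomputable def betaDen (a b : ℝ) : ℝ → ℝ := fun x =>
  if x ∈ Set.Ioo (0:ℝ) 1 then x ^ (a-1) * (1-x) ^ (b-1) else 0

lemma betaDen_nonneg (a b : ℝ) (x : ℝ) : 0 ≤ betaDen a b x := by
  unfold betaDen
  split_ifs with h
  · exact mul_nonneg (Real.rpow_nonneg h.1.le _) (Real.rpow_nonneg (by linarith [h.2.le]) _)
  · exact le_rfl

lemma measurable_betaDen (a b : ℝ) : Measurable (betaDen a b) := by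
  unfold betaDen
  apply Measurable.ite measurableSet_Ioo _ measurable_const
  fun_prop

lemma betaDen_of_not_mem {a b x : ℝ} (h : x ∉ Set.Ioo (0:ℝ) 1) : betaDen a b x = 0 :=
  if_neg h

lemma kernel_eval {a b c : ℝ} (ha : 0 < a) (hb : 0 < b) (hc : 0 < c) (u : ℝ) :
    ∫⁻ y, ENNReal.ofReal (betaDen (a+b) c y) * ENNReal.ofReal y⁻¹ *
        ENNReal.ofReal (betaDen a b (u/y)) ∂volume
      = ENNReal.ofReal (Bfun b c * betaDen a (b+c) u) := by
  by_cases hu : u ∈ Set.Ioo (0:ℝ) 1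
  · obtain ⟨hu0, hu1⟩ := hu
    have hpt : ∀ y : ℝ, ENNReal.ofReal (betaDen (a+b) c y) * ENNReal.ofReal y⁻¹ *
        ENNReal.ofReal (betaDen a b (u/y))
        = (Set.Ioo u 1).indicator
            (fun y => ENNReal.ofReal (u ^ (a-1) * ((y-u) ^ (b-1) * (1-y) ^ (c-1)))) y := by
      intro y
      by_cases hy : y ∈ Set.Ioo u 1
      · obtain ⟨hyu, hy1⟩ := hy
        have hy0 : 0 < y := lt_trans hu0 hyu
        have hyIoo : y ∈ Set.Ioo (0:ℝ) 1 := ⟨hy0, hy1⟩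
        have huy : u / y ∈ Set.Ioo (0:ℝ) 1 := Set.mem_Ioo.2 ⟨div_pos hu0 hy0, (div_lt_one hy0).2 hyu⟩
        rw [Set.indicator_of_mem (Set.mem_Ioo.2 ⟨hyu, hy1⟩)]
        rw [show betaDen (a+b) c y = y ^ (a+b-1) * (1-y) ^ (c-1) from if_pos hyIoo]
        rw [show betaDen a b (u/y) = (u/y) ^ (a-1) * (1-u/y) ^ (b-1) from if_pos huy]
        have n1 : (0:ℝ) ≤ y ^ (a+b-1) * (1-y) ^ (c-1) :=
          mul_nonneg (Real.rpow_nonneg hy0.le _) (Real.rpow_nonneg (by linarith) _)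
        rw [← ENNReal.ofReal_mul n1, ← ENNReal.ofReal_mul (mul_nonneg n1 (by positivity))]
        congr 1
        have e1 : (u/y) ^ (a-1) = u ^ (a-1) / y ^ (a-1) := Real.div_rpow hu0.le hy0.le (a-1)
        have e2 : (1 - u/y) = (y-u)/y := by field_simp
        have e3 : ((y-u)/y) ^ (b-1) = (y-u) ^ (b-1) / y ^ (b-1) :=
          Real.div_rpow (sub_nonneg.2 hyu.le) hy0.le (b-1)
        have e4 : y ^ (a+b-1) = y ^ (a-1) * y ^ (b-1) * y := by
          rw [show a+b-1 = (a-1)+(b-1)+1 by ring, Real.rpow_add_one hy0.ne',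
            Real.rpow_add hy0]
        rw [e1, e2, e3, e4]
        have p1 : (0:ℝ) < y ^ (a-1) := Real.rpow_pos_of_pos hy0 _
        have p2 : (0:ℝ) < y ^ (b-1) := Real.rpow_pos_of_pos hy0 _
        field_simp
      · rw [Set.indicator_of_notMem hy]
        by_cases hyIoo : y ∈ Set.Ioo (0:ℝ) 1
        · have hyu : y ≤ u := by
            by_contra hlt
            exact hy ⟨lt_of_not_ge hlt, hyIoo.2⟩
          have : betaDen a b (u/y) = 0 := by
            apply betaDen_of_not_mem
            intro ⟨_, hlt⟩
            rw [div_lt_one hyIoo.1] at hlt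
            linarith
          rw [this]; simp
        · rw [betaDen_of_not_mem hyIoo]; simp
    rw [lintegral_congr hpt, lintegral_indicator measurableSet_Ioo _]
    have hint : IntegrableOn (fun y => u ^ (a-1) * ((y-u) ^ (b-1) * (1-y) ^ (c-1)))
        (Set.Ioo u 1) volume := by
      have := ((beta_shift_integrable hb hc hu1).const_mul (u ^ (a-1))).1
      rw [← integrableOn_Ioc_iff_integrableOn_Ioo]
      simpa using this
    rw [← MeasureTheory.ofReal_integral_eq_lintegral_ofReal hint]
    · congr 1
      rw [← MeasureTheory.integral_Ioc_eq_integral_Ioo,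
        ← intervalIntegral.integral_of_le hu1.le,
        intervalIntegral.integral_const_mul, beta_shift hb hc hu1,
        show betaDen a (b+c) u = u ^ (a-1) * (1-u) ^ (b+c-1) from if_pos ⟨hu0, hu1⟩]
      ring
    · filter_upwards [ae_restrict_mem measurableSet_Ioo] with y hy
      exact mul_nonneg (Real.rpow_nonneg hu0.le _)
        (mul_nonneg (Real.rpow_nonneg (sub_nonneg.2 hy.1.le) _)
          (Real.rpow_nonneg (by linarith [hy.2.le]) _))
  · have hpt : ∀ y : ℝ, ENNReal.ofReal (betaDen (a+b) c y) * ENNReal.ofReal y⁻¹ *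
        ENNReal.ofReal (betaDen a b (u/y)) = 0 := by
      intro y
      by_cases hyIoo : y ∈ Set.Ioo (0:ℝ) 1
      · have : betaDen a b (u/y) = 0 := by
          apply betaDen_of_not_mem
          intro ⟨h1, h2⟩
          apply hu
          constructor
          · have := mul_pos h1 hyIoo.1
            rwa [div_mul_cancel₀] at this
            exact hyIoo.1.ne'
          · rw [div_lt_one hyIoo.1] at h2
            linarith [hyIoo.2]
        rw [this]; simp
      · rw [betaDen_of_not_mem hyIoo]; simp
    rw [lintegral_congr hpt, lintegral_zero, betaDen_of_not_mem hu, mul_zero,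
      ENNReal.ofReal_zero]

noncomputable def rhoM (a b : ℝ) : Measure ℝ :=
  volume.withDensity fun x => ENNReal.ofReal (betaDen a b x)

instance rhoM.sigmaFinite (a b : ℝ) : SigmaFinite (rhoM a b) := by
  unfold rhoM; infer_instance

lemma measurable_ofReal_betaDen (a b : ℝ) :
    Measurable fun x => ENNReal.ofReal (betaDen a b x) :=
  ENNReal.measurable_ofReal.comp (measurable_betaDen a b)

lemma map_mul_rho {a b c : ℝ} (ha : 0 < a) (hb : 0 < b) (hc : 0 < c) {s : Set ℝ}
    (hs : MeasurableSet s) :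
    Measure.map (fun p : ℝ × ℝ => p.1 * p.2) ((rhoM a b).prod (rhoM (a+b) c)) s
      = (ENNReal.ofReal (Bfun b c) • rhoM a (b+c)) s := by
  have hF := measurable_ofReal_betaDen a b
  have hG := measurable_ofReal_betaDen (a+b) c
  have hm : Measurable fun p : ℝ × ℝ => p.1 * p.2 := measurable_fst.mul measurable_snd
  have hprod : (rhoM a b).prod (rhoM (a+b) c)
      = (volume.prod volume).withDensity
          (fun p => ENNReal.ofReal (betaDen a b p.1) * ENNReal.ofReal (betaDen (a+b) c p.2)) := by
    refine Measure.prod_eq fun s t hs ht => ?_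
    rw [withDensity_apply _ (hs.prod ht), ← Measure.prod_restrict,
      lintegral_prod_mul hF.aemeasurable hG.aemeasurable]
    rw [rhoM, rhoM, withDensity_apply _ hs, withDensity_apply _ ht]
  rw [Measure.map_apply hm hs, hprod, withDensity_apply _ (hm hs),
    ← lintegral_indicator (hm hs)]
  have hpt : ∀ p : ℝ × ℝ,
      ((fun p : ℝ × ℝ => p.1 * p.2) ⁻¹' s).indicator
        (fun p => ENNReal.ofReal (betaDen a b p.1) * ENNReal.ofReal (betaDen (a+b) c p.2)) p
      = ENNReal.ofReal (betaDen a b p.1) * ENNReal.ofReal (betaDen (a+b) c p.2) *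
          s.indicator (fun _ => (1:ℝ≥0∞)) (p.1 * p.2) := by
    intro p
    by_cases h : p.1 * p.2 ∈ s <;>
      simp [Set.indicator_apply, Set.mem_preimage, h]
  rw [lintegral_congr hpt]
  have hmeas1 : Measurable fun p : ℝ × ℝ =>
      ENNReal.ofReal (betaDen a b p.1) * ENNReal.ofReal (betaDen (a+b) c p.2) *
        s.indicator (fun _ => (1:ℝ≥0∞)) (p.1 * p.2) :=
    ((hF.comp measurable_fst).mul (hG.comp measurable_snd)).mul
      ((measurable_const.indicator hs).comp hm)
  rw [lintegral_prod_symm' _ hmeas1]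
  have inner : ∀ y : ℝ,
      (∫⁻ x, ENNReal.ofReal (betaDen a b x) * ENNReal.ofReal (betaDen (a+b) c y) *
        s.indicator (fun _ => (1:ℝ≥0∞)) (x * y) ∂volume)
      = ∫⁻ u, ENNReal.ofReal (betaDen (a+b) c y) * ENNReal.ofReal y⁻¹ *
          ENNReal.ofReal (betaDen a b (u/y)) * s.indicator (fun _ => (1:ℝ≥0∞)) u ∂volume := by
    intro y
    by_cases hy : y ∈ Set.Ioo (0:ℝ) 1
    · have hy0 : 0 < y := hy.1
      have hH : Measurable fun u : ℝ => ENNReal.ofReal (betaDen a b (u/y)) *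
          s.indicator (fun _ => (1:ℝ≥0∞)) u :=
        (ENNReal.measurable_ofReal.comp
          ((measurable_betaDen a b).comp (measurable_id.div_const y))).mul
          (measurable_const.indicator hs)
      -- LHS = G y * ∫⁻ x, H (x*y)
      have e1 : ∀ x : ℝ, ENNReal.ofReal (betaDen a b x) * ENNReal.ofReal (betaDen (a+b) c y) *
            s.indicator (fun _ => (1:ℝ≥0∞)) (x * y)
          = ENNReal.ofReal (betaDen (a+b) c y) *
            (ENNReal.ofReal (betaDen a b ((x*y)/y)) * s.indicator (fun _ => (1:ℝ≥0∞)) (x * y)) := by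
        intro x
        rw [mul_div_cancel_right₀ x hy0.ne']
        ring
      rw [lintegral_congr e1, lintegral_const_mul' _ _ ENNReal.ofReal_ne_top]
      -- subst
      have e2 : (∫⁻ x, ENNReal.ofReal (betaDen a b ((x*y)/y)) *
            s.indicator (fun _ => (1:ℝ≥0∞)) (x * y) ∂volume)
          = ENNReal.ofReal y⁻¹ * ∫⁻ u, ENNReal.ofReal (betaDen a b (u/y)) *
              s.indicator (fun _ => (1:ℝ≥0∞)) u ∂volume := by
        have := lintegral_map hH (measurable_mul_const y) (μ := volume)
        rw [Real.map_volume_mul_right hy0.ne', lintegral_smul_measure] at this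
        rw [← this, abs_of_pos (inv_pos.2 hy0), smul_eq_mul]
      rw [e2, ← mul_assoc]
      -- RHS rearrangement
      have e3 : ∀ u : ℝ, ENNReal.ofReal (betaDen (a+b) c y) * ENNReal.ofReal y⁻¹ *
            ENNReal.ofReal (betaDen a b (u/y)) * s.indicator (fun _ => (1:ℝ≥0∞)) u
          = (ENNReal.ofReal (betaDen (a+b) c y) * ENNReal.ofReal y⁻¹) *
            (ENNReal.ofReal (betaDen a b (u/y)) * s.indicator (fun _ => (1:ℝ≥0∞)) u) := by
        intro u; ring
      rw [lintegral_congr e3, lintegral_const_mul' _ _ (by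
        exact ENNReal.mul_ne_top ENNReal.ofReal_ne_top ENNReal.ofReal_ne_top)]
    · have hzero : betaDen (a+b) c y = 0 := betaDen_of_not_mem hy
      simp [hzero]
  rw [lintegral_congr inner]
  have hmeas2 : Measurable fun p : ℝ × ℝ =>
      ENNReal.ofReal (betaDen (a+b) c p.1) * ENNReal.ofReal p.1⁻¹ *
        ENNReal.ofReal (betaDen a b (p.2/p.1)) * s.indicator (fun _ => (1:ℝ≥0∞)) p.2 :=
    (((hG.comp measurable_fst).mul
        (ENNReal.measurable_ofReal.comp measurable_fst.inv)).mul
      (ENNReal.measurable_ofReal.comp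
        ((measurable_betaDen a b).comp (measurable_snd.div measurable_fst)))).mul
      ((measurable_const.indicator hs).comp measurable_snd)
  rw [lintegral_lintegral_swap hmeas2.aemeasurable]
  have final : ∀ u : ℝ,
      (∫⁻ y, ENNReal.ofReal (betaDen (a+b) c y) * ENNReal.ofReal y⁻¹ *
          ENNReal.ofReal (betaDen a b (u/y)) * s.indicator (fun _ => (1:ℝ≥0∞)) u ∂volume)
      = ENNReal.ofReal (Bfun b c) *
          s.indicator (fun x => ENNReal.ofReal (betaDen a (b+c) x)) u := by
    intro u
    rw [lintegral_mul_const' _ _ (by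
      by_cases h : u ∈ s <;> simp [h]), kernel_eval ha hb hc u,
      ENNReal.ofReal_mul (Bfun_pos hb hc).le, mul_assoc]
    congr 1
    by_cases h : u ∈ s
    · rw [Set.indicator_of_mem h, Set.indicator_of_mem h, mul_one]
    · rw [Set.indicator_of_notMem h, Set.indicator_of_notMem h, mul_zero]
  rw [lintegral_congr final, lintegral_const_mul' _ _ ENNReal.ofReal_ne_top,
    lintegral_indicator hs]
  rw [Measure.smul_apply, smul_eq_mul, rhoM, withDensity_apply _ hs]

lemma betaMeasure_eq_smul_rhoM {a b : ℝ} (ha : 0 < a) (hb : 0 < b) :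
    _root_.betaMeasure a b = ENNReal.ofReal (Bfun a b)⁻¹ • rhoM a b := by
  rw [_root_.betaMeasure, rhoM, ← withDensity_smul _ (measurable_ofReal_betaDen a b)]
  congr 1
  funext x
  simp only [Pi.smul_apply, smul_eq_mul]
  rw [← ENNReal.ofReal_mul (inv_nonneg.2 (Bfun_pos ha hb).le)]
  congr 1
  rw [betaDen]
  by_cases h : x ∈ Set.Ioo (0:ℝ) 1
  · rw [if_pos h, if_pos h, div_eq_inv_mul]; rfl
  · rw [if_neg h, if_neg h, mul_zero]

lemma Bfun_identity {a b c : ℝ} (ha : 0 < a) (hb : 0 < b) (hc : 0 < c) :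
    (Bfun a b)⁻¹ * (Bfun (a+b) c)⁻¹ * Bfun b c = (Bfun a (b+c))⁻¹ := by
  have g1 := Real.Gamma_pos_of_pos ha
  have g2 := Real.Gamma_pos_of_pos hb
  have g3 := Real.Gamma_pos_of_pos hc
  have g4 := Real.Gamma_pos_of_pos (show (0:ℝ) < a + b by linarith)
  have g5 := Real.Gamma_pos_of_pos (show (0:ℝ) < b + c by linarith)
  have g6 := Real.Gamma_pos_of_pos (show (0:ℝ) < a + b + c by linarith)
  unfold Bfun
  rw [show a + (b + c) = a + b + c by ring]
  field_simp

lemma hasBetaDist_mul {Ω : Type*} [MeasurableSpace Ω] {P : Measure Ω} [IsProbabilityMeasure P]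
    {Y Z : Ω → ℝ} {a b c : ℝ} (ha : 0 < a) (hb : 0 < b) (hc : 0 < c)
    (hY : HasBetaDist P Y a b) (hZ : HasBetaDist P Z (a+b) c)
    (hind : IndepFun Y Z P) : HasBetaDist P (fun ω => Y ω * Z ω) a (b+c) := by
  refine ⟨hY.1.mul hZ.1, ?_⟩
  have hm : Measurable fun p : ℝ × ℝ => p.1 * p.2 := measurable_fst.mul measurable_snd
  have hpair : Measurable fun ω => (Y ω, Z ω) := hY.1.prodMk hZ.1
  have h1 : Measure.map (fun ω => Y ω * Z ω) P
      = Measure.map (fun p : ℝ × ℝ => p.1 * p.2) (Measure.map (fun ω => (Y ω, Z ω)) P) := by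
    rw [Measure.map_map hm hpair]
    rfl
  have h2 : Measure.map (fun ω => (Y ω, Z ω)) P = (_root_.betaMeasure a b).prod (_root_.betaMeasure (a+b) c) := by
    rw [(indepFun_iff_map_prod_eq_prod_map_map hY.1.aemeasurable hZ.1.aemeasurable).1 hind,
      hY.2, hZ.2]
  rw [h1, h2, betaMeasure_eq_smul_rhoM ha hb, betaMeasure_eq_smul_rhoM (by linarith : (0:ℝ) < a + b) hc,
    betaMeasure_eq_smul_rhoM ha (by linarith : (0:ℝ) < b + c)]
  set c1 := ENNReal.ofReal (Bfun a b)⁻¹ with hc1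
  set c2 := ENNReal.ofReal (Bfun (a+b) c)⁻¹ with hc2
  set c3 := ENNReal.ofReal (Bfun a (b+c))⁻¹ with hc3
  ext s hs
  rw [Measure.map_apply hm hs]
  have hps : MeasurableSet ((fun p : ℝ × ℝ => p.1 * p.2) ⁻¹' s) := hm hs
  have step1 : ((c1 • rhoM a b).prod (c2 • rhoM (a+b) c)) ((fun p : ℝ × ℝ => p.1 * p.2) ⁻¹' s)
      = c1 * (c2 * ((rhoM a b).prod (rhoM (a+b) c)) ((fun p : ℝ × ℝ => p.1 * p.2) ⁻¹' s)) := by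
    rw [Measure.prod_apply hps, Measure.prod_apply hps, lintegral_smul_measure]
    simp only [Measure.smul_apply, smul_eq_mul]
    rw [lintegral_const_mul' _ _ ENNReal.ofReal_ne_top]
  rw [step1, ← Measure.map_apply hm hs,
    show Measure.map (fun p : ℝ × ℝ => p.1 * p.2) ((rhoM a b).prod (rhoM (a+b) c)) s
      = (ENNReal.ofReal (Bfun b c) • rhoM a (b+c)) s from map_mul_rho ha hb hc hs]
  simp only [Measure.smul_apply, smul_eq_mul]
  rw [← mul_assoc, ← mul_assoc, hc1, hc2, hc3,
    ← ENNReal.ofReal_mul (inv_nonneg.2 (Bfun_pos ha hb).le),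
    ← ENNReal.ofReal_mul (mul_nonneg (inv_nonneg.2 (Bfun_pos ha hb).le)
      (inv_nonneg.2 (Bfun_pos (by linarith) hc).le)),
    Bfun_identity ha hb hc]

end BetaAux

theorem stmt0 (n : ℕ) (hn : 1 ≤ n)
    {Ω : Type*} [MeasurableSpace Ω] (P : Measure Ω) [IsProbabilityMeasure P]
    (a b : Fin n → ℝ) (ha : ∀ i, 0 < a i) (hb : ∀ i, 0 < b i)
    (htel : ∀ i : Fin n, ∀ h : i.val + 1 < n, a ⟨i.val + 1, h⟩ = a i + b i)
    (X : Fin n → Ω → ℝ)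
    (hindep : iIndepFun X P)
    (hX : ∀ i, HasBetaDist P (X i) (a i) (b i)) :
    HasBetaDist P (fun ω => ∏ i, X i ω) (a ⟨0, hn⟩) (∑ i, b i) := by
  set T : ℕ → Finset (Fin n) := fun k => Finset.univ.filter (fun i : Fin n => (i : ℕ) < k) with hT
  -- telescoping
  have tel : ∀ k : ℕ, ∀ hk : k < n, a ⟨k, hk⟩ = a ⟨0, hn⟩ + ∑ i ∈ T k, b i := by
    intro k
    induction k with
    | zero => intro hk; simp [hT]
    | succ m ih =>
      intro hk
      have hm : m < n := Nat.lt_of_succ_lt hk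
      have hins : T (m+1) = insert ⟨m, hm⟩ (T m) := by
        ext i
        simp only [hT, Finset.mem_filter, Finset.mem_univ, true_and, Finset.mem_insert,
          Fin.ext_iff]
        omega
      have hnot : (⟨m, hm⟩ : Fin n) ∉ T m := by
        simp [hT]
      rw [hins, Finset.sum_insert hnot]
      have := htel ⟨m, hm⟩ hk
      simp only [Fin.val_mk] at this
      rw [this, ih hm]
      ring
  -- main induction
  have main : ∀ k : ℕ, 1 ≤ k → k ≤ n →
      HasBetaDist P (fun ω => ∏ i ∈ T k, X i ω) (a ⟨0, hn⟩) (∑ i ∈ T k, b i) := by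
    intro k
    induction k with
    | zero => intro h; omega
    | succ m ih =>
      intro _ hmn
      rcases Nat.eq_zero_or_pos m with hm0 | hm1
      · subst hm0
        have h1 : T 1 = {⟨0, hn⟩} := by
          ext i
          simp only [hT, Finset.mem_filter, Finset.mem_univ, true_and, Finset.mem_singleton,
            Fin.ext_iff]
          omega
        rw [h1]
        simpa using hX ⟨0, hn⟩
      · have hmn' : m < n := hmn
        have hins : T (m+1) = insert ⟨m, hmn'⟩ (T m) := by
          ext i
          simp only [hT, Finset.mem_filter, Finset.mem_univ, true_and, Finset.mem_insert,
            Fin.ext_iff]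
          omega
        have hnot : (⟨m, hmn'⟩ : Fin n) ∉ T m := by simp [hT]
        have ihm := ih hm1 (le_of_lt hmn')
        have hSpos : 0 < ∑ i ∈ T m, b i := by
          apply Finset.sum_pos (fun i _ => hb i)
          refine ⟨⟨0, hn⟩, ?_⟩
          simp [hT]
          omega
        have hind : IndepFun (∏ i ∈ T m, X i) (X ⟨m, hmn'⟩) P :=
          hindep.indepFun_finset_prod_of_notMem (fun i => (hX i).1) hnot
        have hprodeq : (fun ω => ∏ i ∈ T m, X i ω) = ∏ i ∈ T m, X i := by
          funext ω
          simp [Finset.prod_apply]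
        have hY : HasBetaDist P (∏ i ∈ T m, X i) (a ⟨0, hn⟩) (∑ i ∈ T m, b i) := by
          rw [← hprodeq]; exact ihm
        have hZ : HasBetaDist P (X ⟨m, hmn'⟩) (a ⟨0, hn⟩ + ∑ i ∈ T m, b i) (b ⟨m, hmn'⟩) := by
          have := tel m hmn'
          rw [← this]
          exact hX _
        have key := hasBetaDist_mul (ha ⟨0, hn⟩) hSpos (hb ⟨m, hmn'⟩) hY hZ hind
        rw [hins, Finset.sum_insert hnot]
        have : (fun ω => ∏ i ∈ insert (⟨m, hmn'⟩ : Fin n) (T m), X i ω)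
            = fun ω => (∏ i ∈ T m, X i) ω * X ⟨m, hmn'⟩ ω := by
          funext ω
          rw [Finset.prod_insert hnot]
          simp [Finset.prod_apply]
          ring
        rw [this, show b ⟨m, hmn'⟩ + ∑ i ∈ T m, b i = (∑ i ∈ T m, b i) + b ⟨m, hmn'⟩ by ring]
        exact key
  have hTn : T n = Finset.univ := by
    ext i
    simp [hT, i.isLt]
  have := main n hn le_rfl
  rw [hTn] at this
  exact this
end

section
/- Fix an integer d ≥ 2. Let (X_{j,i})_{0 ≤ j ≤ d−2, j ≤ i ≤ d−2} be independent random variables with X_{j,i} having the Beta(1 + i/2, 1/2) distribution, and let Y_1,…,Y_{d−1} be independent random variables with Y_j having the Beta((j+1)/2, (d−j)/2) distribution. Then the double product ∏_{j=0}^{d−2} ∏_{i=j}^{d−2} X_{j,i} has the same distribution as the single product ∏_{j=1}^{d−1} Y_j. (Consequently, the determinant of a correlation matrix sampled uniformly from the space of d × d positive definite correlation matrices can be written as a product of d−1 independent Beta distributed random variables.) -/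
open MeasureTheory ProbabilityTheory Real Filter Finset

open Topology intervalIntegral
open scoped ENNReal NNReal

lemma realBetaIntegral {a b : ℝ} (ha : 0 < a) (hb : 0 < b) :
    ∫ x in Set.Ioo (0:ℝ) 1, x ^ (a-1) * (1-x) ^ (b-1)
      = Real.Gamma a * Real.Gamma b / Real.Gamma (a+b) := by
  have h := Complex.Gamma_mul_Gamma_eq_betaIntegral (s := a) (t := b)
    (by simpa using ha) (by simpa using hb)
  rw [Complex.betaIntegral] at h
  have key : (∫ x in (0:ℝ)..1, (x:ℂ) ^ ((a:ℂ)-1) * ((1:ℂ)-x) ^ ((b:ℂ)-1))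
      = ((∫ x in (0:ℝ)..1, x ^ (a-1) * (1-x) ^ (b-1) : ℝ) : ℂ) := by
    rw [← intervalIntegral.integral_ofReal]
    refine intervalIntegral.integral_congr fun x hx => ?_
    rw [Set.uIcc_of_le (by norm_num)] at hx
    rw [show ((a:ℂ)-1) = ((a-1:ℝ):ℂ) from by push_cast; ring,
      show ((1:ℂ)-(x:ℂ)) = ((1-x:ℝ):ℂ) from by push_cast; ring,
      show ((b:ℂ)-1) = ((b-1:ℝ):ℂ) from by push_cast; ring,
      ← Complex.ofReal_cpow hx.1, ← Complex.ofReal_cpow (by linarith [hx.2]),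
      ← Complex.ofReal_mul]
  rw [key] at h
  have hΓ : (Complex.Gamma ((a:ℂ)+b)) ≠ 0 := by
    rw [show ((a:ℂ)+b) = ((a+b:ℝ):ℂ) by push_cast; ring, Complex.Gamma_ofReal]
    simpa using (Real.Gamma_pos_of_pos (by linarith)).ne'
  have h2 : ((∫ x in (0:ℝ)..1, x ^ (a-1) * (1-x) ^ (b-1) : ℝ) : ℂ)
      = Complex.Gamma a * Complex.Gamma b / Complex.Gamma ((a:ℂ)+b) := by
    rw [eq_div_iff hΓ]
    linear_combination -h
  rw [show ((a:ℂ)+b) = ((a+b:ℝ):ℂ) by push_cast; ring] at h2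
  rw [Complex.Gamma_ofReal, Complex.Gamma_ofReal, Complex.Gamma_ofReal] at h2
  have h3 : (∫ x in (0:ℝ)..1, x ^ (a-1) * (1-x) ^ (b-1) : ℝ)
      = Gamma a * Gamma b / Gamma (a+b) := by
    exact_mod_cast h2
  rw [intervalIntegral.integral_of_le (by norm_num : (0:ℝ) ≤ 1),
    MeasureTheory.integral_Ioc_eq_integral_Ioo] at h3
  exact h3

noncomputable def betaDens (a b : ℝ) (x : ℝ) : ℝ :=
  if x ∈ Set.Ioo (0 : ℝ) 1 then
    x ^ (a - 1) * (1 - x) ^ (b - 1) / (Real.Gamma a * Real.Gamma b / Real.Gamma (a + b))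
  else 0

lemma betaDens_nonneg {a b : ℝ} (ha : 0 < a) (hb : 0 < b) (x : ℝ) : 0 ≤ betaDens a b x := by
  unfold betaDens
  split_ifs with h
  · have h1 : (0:ℝ) ≤ x ^ (a-1) := Real.rpow_nonneg h.1.le _
    have h2 : (0:ℝ) ≤ (1-x) ^ (b-1) := Real.rpow_nonneg (by linarith [h.2]) _
    have h3 : (0:ℝ) < Real.Gamma a * Real.Gamma b / Real.Gamma (a+b) := by
      have := Real.Gamma_pos_of_pos ha
      have := Real.Gamma_pos_of_pos hb
      have := Real.Gamma_pos_of_pos (show (0:ℝ) < a + b by linarith)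
      positivity
    positivity
  · exact le_refl _

lemma betaDens_measurable (a b : ℝ) : Measurable (betaDens a b) := by
  unfold betaDens
  refine Measurable.ite measurableSet_Ioo ?_ measurable_const
  fun_prop

lemma betaMeasure_eq (a b : ℝ) :
    _root_.betaMeasure a b
      = volume.withDensity fun x => ((Real.toNNReal (betaDens a b x) : ℝ≥0) : ℝ≥0∞) := by
  rfl

lemma betaMeasure_compl_Ioo (a b : ℝ) : _root_.betaMeasure a b (Set.Ioo (0:ℝ) 1)ᶜ = 0 := by
  rw [betaMeasure_eq, withDensity_apply _ measurableSet_Ioo.compl]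
  rw [MeasureTheory.setLIntegral_congr_fun measurableSet_Ioo.compl
    (fun x hx => ?_), lintegral_zero]
  rw [Set.mem_compl_iff] at hx
  simp [betaDens, hx]

noncomputable def betaMoment (a b : ℝ) (n : ℕ) : ℝ :=
  Real.Gamma (a+n) * Real.Gamma (a+b) / (Real.Gamma a * Real.Gamma (a+b+n))

lemma betaMeasure_moment {a b : ℝ} (ha : 0 < a) (hb : 0 < b) (n : ℕ) :
    ∫ x, x ^ n ∂(_root_.betaMeasure a b) = betaMoment a b n := by
  rw [betaMeasure_eq, integral_withDensity_eq_integral_smul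
    ((betaDens_measurable a b).real_toNNReal) (fun x => x ^ n)]
  have h1 : ∀ x : ℝ, (Real.toNNReal (betaDens a b x)) • (x ^ n)
      = Set.indicator (Set.Ioo (0:ℝ) 1)
        (fun x => x ^ ((a+n) - 1) * (1-x) ^ (b-1) / (Real.Gamma a * Real.Gamma b / Real.Gamma (a+b))) x := by
    intro x
    rw [NNReal.smul_def, smul_eq_mul, Real.coe_toNNReal _ (betaDens_nonneg ha hb x)]
    unfold betaDens
    rw [Set.indicator_apply]
    split_ifs with h
    · have hx : (0:ℝ) < x := h.1
      rw [show x ^ ((a+n)-1) = x ^ (a-1) * x ^ (n:ℝ) by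
        rw [← Real.rpow_add hx]; ring_nf]
      rw [Real.rpow_natCast]
      ring
    · simp
  rw [MeasureTheory.integral_congr_ae (Filter.Eventually.of_forall h1),
    MeasureTheory.integral_indicator measurableSet_Ioo]
  rw [MeasureTheory.integral_div, realBetaIntegral (by positivity) hb]
  unfold betaMoment
  have g1 := Real.Gamma_pos_of_pos ha
  have g2 := Real.Gamma_pos_of_pos hb
  have g3 := Real.Gamma_pos_of_pos (show (0:ℝ) < a+b by linarith)
  have g4 := Real.Gamma_pos_of_pos (show (0:ℝ) < a+(n:ℝ)+b by positivity)
  rw [show a+b+(n:ℝ) = a+(n:ℝ)+b by ring]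
  field_simp



lemma tele (f : ℕ → ℝ) (hf : ∀ i, f i ≠ 0) : ∀ m j, j ≤ m + 1 →
    ∏ i ∈ Finset.Icc j m, (f i / f (i+1)) = f j / f (m+1) := by
  intro m
  induction m with
  | zero =>
    intro j hj
    interval_cases j
    · simp
    · simp [div_self (hf 1)]
  | succ m ih =>
    intro j hj
    rcases Nat.lt_or_ge j (m+2) with h | h
    · have hj' : j ≤ m + 1 := Nat.lt_succ_iff.mp h
      rw [Finset.prod_Icc_succ_top hj', ih j hj',
        div_mul_div_cancel₀ (hf (m+1))]
    · have : j = m + 2 := le_antisymm hj h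
      subst this
      rw [Finset.Icc_eq_empty (by omega), Finset.prod_empty, div_self (hf (m+2))]

section moments
variable (n : ℕ)

noncomputable def F (n : ℕ) (i : ℕ) : ℝ :=
  Real.Gamma (1 + (i:ℝ)/2 + n) / Real.Gamma (1 + (i:ℝ)/2)

lemma F_pos (n i : ℕ) : 0 < F n i := by
  unfold F
  have h1 : (0:ℝ) < 1 + (i:ℝ)/2 + n := by positivity
  have h2 : (0:ℝ) < 1 + (i:ℝ)/2 := by positivity
  exact div_pos (Real.Gamma_pos_of_pos h1) (Real.Gamma_pos_of_pos h2)

lemma step_A (n i : ℕ) : betaMoment (1 + (i:ℝ)/2) (1/2) n = F n i / F n (i+1) := by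
  unfold betaMoment F
  have e1 : (1:ℝ) + (i:ℝ)/2 + 1/2 = 1 + ((i:ℝ)+1)/2 := by ring
  have e2 : ((i+1:ℕ):ℝ) = (i:ℝ)+1 := by push_cast; ring
  rw [e1, e2]
  have g1 := Real.Gamma_pos_of_pos (show (0:ℝ) < 1 + (i:ℝ)/2 by positivity)
  have g2 := Real.Gamma_pos_of_pos (show (0:ℝ) < 1 + ((i:ℝ)+1)/2 by positivity)
  have g3 := Real.Gamma_pos_of_pos (show (0:ℝ) < 1 + (i:ℝ)/2 + n by positivity)
  have g4 := Real.Gamma_pos_of_pos (show (0:ℝ) < 1 + ((i:ℝ)+1)/2 + n by positivity)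
  field_simp
end moments

lemma moments_eq (d : ℕ) (hd : 2 ≤ d) (n : ℕ) :
    ∏ j ∈ Finset.range (d-1), ∏ i ∈ Finset.Icc j (d-2), betaMoment (1 + (i:ℝ)/2) (1/2) n
      = ∏ j ∈ Finset.Icc 1 (d-1), betaMoment (((j:ℝ)+1)/2) (((d:ℝ)-(j:ℝ))/2) n := by
  have hcast : ((d-1:ℕ):ℝ) = (d:ℝ) - 1 := by
    rw [Nat.cast_sub (by omega)]; norm_num
  have key : ∀ j ∈ Finset.range (d-1),
      ∏ i ∈ Finset.Icc j (d-2), betaMoment (1 + (i:ℝ)/2) (1/2) n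
        = betaMoment (((((j+1):ℕ):ℝ)+1)/2) (((d:ℝ)-((j+1:ℕ):ℝ))/2) n := by
    intro j hj
    rw [Finset.mem_range] at hj
    have hj2 : j ≤ d - 2 := by omega
    calc ∏ i ∈ Finset.Icc j (d-2), betaMoment (1 + (i:ℝ)/2) (1/2) n
        = ∏ i ∈ Finset.Icc j (d-2), (F n i / F n (i+1)) := by
          exact Finset.prod_congr rfl fun i _ => step_A n i
      _ = F n j / F n (d-2+1) := tele (F n) (fun i => (F_pos n i).ne') (d-2) j (by omega)
      _ = betaMoment (((((j+1):ℕ):ℝ)+1)/2) (((d:ℝ)-((j+1:ℕ):ℝ))/2) n := by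
          have hd2 : d - 2 + 1 = d - 1 := by omega
          rw [hd2]
          unfold F betaMoment
          rw [hcast]
          have e1 : ((((j+1):ℕ):ℝ)+1)/2 = 1 + (j:ℝ)/2 := by push_cast; ring
          have e2 : ((((j+1):ℕ):ℝ)+1)/2 + ((d:ℝ)-((j+1:ℕ):ℝ))/2 = 1 + ((d:ℝ)-1)/2 := by
            push_cast; ring
          rw [e1] at *
          rw [show ((((j+1):ℕ)):ℝ) = (j:ℝ)+1 by push_cast; ring]
          rw [show (1+(j:ℝ)/2 + ((d:ℝ)-((j:ℝ)+1))/2) = 1 + ((d:ℝ)-1)/2 by ring]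
          have g1 := Real.Gamma_pos_of_pos (show (0:ℝ) < 1 + (j:ℝ)/2 by positivity)
          have g2 := Real.Gamma_pos_of_pos (show (0:ℝ) < 1 + ((d:ℝ)-1)/2 by
            have : (2:ℝ) ≤ d := by exact_mod_cast hd
            nlinarith)
          have g3 := Real.Gamma_pos_of_pos (show (0:ℝ) < 1 + (j:ℝ)/2 + n by positivity)
          have g4 := Real.Gamma_pos_of_pos (show (0:ℝ) < 1 + ((d:ℝ)-1)/2 + n by
            have : (2:ℝ) ≤ d := by exact_mod_cast hd
            have : (0:ℝ) ≤ n := Nat.cast_nonneg n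
            nlinarith)
          field_simp
  rw [Finset.prod_congr rfl key]
  refine Finset.prod_nbij' (fun j => j + 1) (fun j => j - 1) ?_ ?_ ?_ ?_ ?_
  · intro a ha; simp only [Finset.mem_range, Finset.mem_Icc] at ha ⊢; omega
  · intro a ha; simp only [Finset.mem_range, Finset.mem_Icc] at ha ⊢; omega
  · intro a ha; simp only [Finset.mem_range] at ha; omega
  · intro a ha; simp only [Finset.mem_Icc] at ha; omega
  · intro a ha; rfl

lemma integrable_pow_of_concentrated (κ : Measure ℝ) [IsProbabilityMeasure κ]
    (hκ : κ (Set.Icc (0:ℝ) 1)ᶜ = 0) (k : ℕ) : Integrable (fun x : ℝ => x ^ k) κ := by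
  have hae : ∀ᵐ x ∂κ, x ∈ Set.Icc (0:ℝ) 1 := by
    rw [MeasureTheory.ae_iff]
    exact hκ
  refine (integrable_const (1:ℝ)).mono' (by fun_prop) ?_
  filter_upwards [hae] with x hx
  rw [Real.norm_eq_abs, abs_pow]
  calc |x| ^ k ≤ 1 ^ k := pow_le_pow_left₀ (abs_nonneg x) (abs_le.mpr ⟨by linarith [hx.1], hx.2⟩) k
    _ = 1 := one_pow k

lemma ext_of_moments (μ ν : Measure ℝ) [IsProbabilityMeasure μ] [IsProbabilityMeasure ν]
    (hμ : μ (Set.Icc (0:ℝ) 1)ᶜ = 0) (hν : ν (Set.Icc (0:ℝ) 1)ᶜ = 0)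
    (h : ∀ n : ℕ, ∫ x, x ^ n ∂μ = ∫ x, x ^ n ∂ν) : μ = ν := by
  have hsm : MeasurableSet (Set.Icc (0:ℝ) 1) := measurableSet_Icc
  have hemb : MeasurableEmbedding (Subtype.val : Set.Icc (0:ℝ) 1 → ℝ) :=
    MeasurableEmbedding.subtype_coe hsm
  set μ' := Measure.comap Subtype.val μ with hμ'def
  set ν' := Measure.comap Subtype.val ν with hν'def
  have hmapμ : Measure.map (Subtype.val) μ' = μ := by
    rw [hμ'def, hemb.map_comap, Subtype.range_coe]
    refine Measure.restrict_eq_self_of_ae_mem ?_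
    rw [MeasureTheory.ae_iff]
    exact hμ
  have hmapν : Measure.map (Subtype.val) ν' = ν := by
    rw [hν'def, hemb.map_comap, Subtype.range_coe]
    refine Measure.restrict_eq_self_of_ae_mem ?_
    rw [MeasureTheory.ae_iff]
    exact hν
  haveI : IsFiniteMeasure μ' := by
    constructor
    rw [hμ'def, hemb.comap_apply]
    exact measure_lt_top μ _
  haveI : IsFiniteMeasure ν' := by
    constructor
    rw [hν'def, hemb.comap_apply]
    exact measure_lt_top ν _
  have keyμ : ∀ gR : ℝ → ℝ, AEStronglyMeasurable gR μ →
      ∫ x, gR (x:ℝ) ∂μ' = ∫ x, gR x ∂μ := by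
    intro gR hg
    conv_rhs => rw [← hmapμ]
    rw [integral_map hemb.measurable.aemeasurable (by rwa [hmapμ])]
  have keyν : ∀ gR : ℝ → ℝ, AEStronglyMeasurable gR ν →
      ∫ x, gR (x:ℝ) ∂ν' = ∫ x, gR x ∂ν := by
    intro gR hg
    conv_rhs => rw [← hmapν]
    rw [integral_map hemb.measurable.aemeasurable (by rwa [hmapν])]
  have hpol : ∀ p : Polynomial ℝ, ∫ x, p.eval x ∂μ = ∫ x, p.eval x ∂ν := by
    intro p
    have hev : ∀ x : ℝ, p.eval x
        = ∑ k ∈ Finset.range (p.natDegree + 1), p.coeff k * x ^ k := fun x =>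
      Polynomial.eval_eq_sum_range x
    calc ∫ x, p.eval x ∂μ
        = ∫ x, ∑ k ∈ Finset.range (p.natDegree + 1), p.coeff k * x ^ k ∂μ := by
          exact integral_congr_ae (Filter.Eventually.of_forall (fun x => hev x))
      _ = ∑ k ∈ Finset.range (p.natDegree + 1), ∫ x, p.coeff k * x ^ k ∂μ := by
          exact integral_finset_sum _ (fun k _ =>
            (integrable_pow_of_concentrated μ hμ k).const_mul _)
      _ = ∑ k ∈ Finset.range (p.natDegree + 1), ∫ x, p.coeff k * x ^ k ∂ν := by
          refine Finset.sum_congr rfl fun k _ => ?_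
          rw [MeasureTheory.integral_const_mul, MeasureTheory.integral_const_mul, h k]
      _ = ∫ x, ∑ k ∈ Finset.range (p.natDegree + 1), p.coeff k * x ^ k ∂ν := by
          exact (integral_finset_sum _ (fun k _ =>
            (integrable_pow_of_concentrated ν hν k).const_mul _)).symm
      _ = ∫ x, p.eval x ∂ν := by
          exact integral_congr_ae (Filter.Eventually.of_forall (fun x => (hev x).symm))
  have claim : ∀ g : C(Set.Icc (0:ℝ) 1, ℝ), ∫ x, g x ∂μ' = ∫ x, g x ∂ν' := by
    intro g
    have hdense := polynomialFunctions_closure_eq_top (0:ℝ) 1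
    have hg : g ∈ (polynomialFunctions (Set.Icc (0:ℝ) 1)).topologicalClosure := by
      rw [hdense]; trivial
    have hg' : g ∈ closure ((polynomialFunctions (Set.Icc (0:ℝ) 1)) :
        Set C(Set.Icc (0:ℝ) 1, ℝ)) := by
      rw [← SetLike.mem_coe, Subalgebra.topologicalClosure_coe] at hg
      exact hg
    obtain ⟨u, hu_mem, hu_tend⟩ := mem_closure_iff_seq_limit.mp hg'
    have hun : ∀ n, ∫ x, u n x ∂μ' = ∫ x, u n x ∂ν' := by
      intro n
      have := hu_mem n
      rw [polynomialFunctions_coe] at this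
      obtain ⟨p, hp⟩ := this
      have hval : ∀ x : Set.Icc (0:ℝ) 1, u n x = p.eval (x:ℝ) := by
        intro x
        rw [← hp]
        rfl
      have e1 : ∫ x, u n x ∂μ' = ∫ x, p.eval (x:ℝ) ∂μ' :=
        integral_congr_ae (Filter.Eventually.of_forall (fun x => hval x))
      have e2 : ∫ x, u n x ∂ν' = ∫ x, p.eval (x:ℝ) ∂ν' :=
        integral_congr_ae (Filter.Eventually.of_forall (fun x => hval x))
      have hpm : AEStronglyMeasurable (fun x : ℝ => p.eval x) μ :=
        (Polynomial.continuous p).aestronglyMeasurable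
      have hpm' : AEStronglyMeasurable (fun x : ℝ => p.eval x) ν :=
        (Polynomial.continuous p).aestronglyMeasurable
      rw [e1, e2, keyμ _ hpm, keyν _ hpm', hpol p]
    -- limit argument
    have integ : ∀ (κ : Measure (Set.Icc (0:ℝ) 1)) (_ : IsFiniteMeasure κ)
        (f : C(Set.Icc (0:ℝ) 1, ℝ)), Integrable (fun x => f x) κ := by
      intro κ hκ f
      exact (BoundedContinuousFunction.mkOfCompact f).integrable κ
    have key_tend : ∀ (κ : Measure (Set.Icc (0:ℝ) 1)) (hκ : IsFiniteMeasure κ),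
        Tendsto (fun n => ∫ x, u n x ∂κ) atTop (𝓝 (∫ x, g x ∂κ)) := by
      intro κ hκ
      rw [tendsto_iff_dist_tendsto_zero]
      have hb : ∀ n, dist (∫ x, u n x ∂κ) (∫ x, g x ∂κ)
          ≤ dist (u n) g * (κ Set.univ).toReal := by
        intro n
        rw [Real.dist_eq, ← integral_sub (integ κ hκ (u n)) (integ κ hκ g)]
        have := norm_integral_le_of_norm_le_const (μ := κ)
          (f := fun x => u n x - g x) (C := dist (u n) g)
          (Filter.Eventually.of_forall (fun x => by
            rw [Real.norm_eq_abs, ← Real.dist_eq]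
            exact ContinuousMap.dist_apply_le_dist x))
        simpa [measureReal_def] using this
      have hdist : Tendsto (fun n => dist (u n) g * (κ Set.univ).toReal) atTop (𝓝 0) := by
        have h0 : Tendsto (fun n => dist (u n) g) atTop (𝓝 0) :=
          tendsto_iff_dist_tendsto_zero.mp hu_tend
        simpa using h0.mul_const ((κ Set.univ).toReal)
      exact squeeze_zero (fun n => dist_nonneg) hb hdist
    have t1 := key_tend μ' inferInstance
    have t2 := key_tend ν' inferInstance
    rw [funext hun] at t1
    exact tendsto_nhds_unique t1 t2
  have hμν' : μ' = ν' := by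
    refine ext_of_forall_lintegral_eq_of_IsFiniteMeasure ?_
    intro f
    have hc : Continuous (fun x : Set.Icc (0:ℝ) 1 => ((f x : ℝ≥0) : ℝ)) :=
      NNReal.continuous_coe.comp f.continuous
    have := claim ⟨fun x => ((f x : ℝ≥0) : ℝ), hc⟩
    simp only [ContinuousMap.coe_mk] at this
    rw [← BoundedContinuousFunction.toReal_lintegral_coe_eq_integral f μ',
      ← BoundedContinuousFunction.toReal_lintegral_coe_eq_integral f ν'] at this
    exact (ENNReal.toReal_eq_toReal_iff'
      (BoundedContinuousFunction.lintegral_lt_top_of_nnreal μ' f).ne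
      (BoundedContinuousFunction.lintegral_lt_top_of_nnreal ν' f).ne).mp this
  rw [← hmapμ, ← hmapν, hμν']

lemma indep_prod_integral {Ω ι : Type*} [MeasurableSpace Ω] (P : Measure Ω)
    [IsProbabilityMeasure P] (f : ι → Ω → ℝ)
    (hindep : iIndepFun f P)
    (hmeas : ∀ i, Measurable (f i)) (s : Finset ι) :
    ∫ ω, ∏ i ∈ s, f i ω ∂P = ∏ i ∈ s, ∫ ω, f i ω ∂P := by
  classical
  induction s using Finset.induction_on with
  | empty => simp
  | @insert a s ha ih =>
    rw [Finset.prod_insert ha]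
    have hind : IndepFun (∏ j ∈ s, f j) (f a) P :=
      hindep.indepFun_finsetProd_of_notMem hmeas ha
    have hprodmeas : Measurable (∏ j ∈ s, f j) := by
      rw [show (∏ j ∈ s, f j) = fun ω => ∏ j ∈ s, f j ω from funext fun ω =>
        Finset.prod_apply ω s f]
      exact Finset.measurable_prod s (fun i _ => hmeas i)
    have := hind.integral_mul_eq_mul_integral hprodmeas.aestronglyMeasurable (hmeas a).aestronglyMeasurable
    calc ∫ ω, ∏ i ∈ insert a s, f i ω ∂P
        = ∫ ω, ((∏ j ∈ s, f j) * f a) ω ∂P := by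
          refine integral_congr_ae (Filter.Eventually.of_forall fun ω => ?_)
          simp only [Pi.mul_apply, Finset.prod_apply]
          rw [Finset.prod_insert ha]
          ring
      _ = (∫ ω, (∏ j ∈ s, f j) ω ∂P) * ∫ ω, f a ω ∂P := this
      _ = (∏ i ∈ s, ∫ ω, f i ω ∂P) * ∫ ω, f a ω ∂P := by
          rw [← ih]
          congr 1
          refine integral_congr_ae (Filter.Eventually.of_forall fun ω => ?_)
          simp only [Finset.prod_apply]
      _ = (∫ ω, f a ω ∂P) * ∏ i ∈ s, ∫ ω, f i ω ∂P := by ring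

lemma map_prod_props {Ω ι : Type*} [MeasurableSpace Ω] (P : Measure Ω) [IsProbabilityMeasure P]
    (f : ι → Ω → ℝ) (hindep : iIndepFun f P)
    (hmeas : ∀ i, Measurable (f i))
    (S : Finset ι) (a b : ι → ℝ) (ha : ∀ q ∈ S, 0 < a q) (hb : ∀ q ∈ S, 0 < b q)
    (hdist : ∀ q ∈ S, Measure.map (f q) P = _root_.betaMeasure (a q) (b q)) :
    (Measure.map (fun ω => ∏ q ∈ S, f q ω) P) (Set.Icc (0:ℝ) 1)ᶜ = 0 ∧
    ∀ n : ℕ, ∫ x, x ^ n ∂(Measure.map (fun ω => ∏ q ∈ S, f q ω) P)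
      = ∏ q ∈ S, betaMoment (a q) (b q) n := by
  have hTmeas : Measurable (fun ω => ∏ q ∈ S, f q ω) :=
    Finset.measurable_prod S (fun q _ => hmeas q)
  have hae_each : ∀ q ∈ S, ∀ᵐ ω ∂P, f q ω ∈ Set.Icc (0:ℝ) 1 := by
    intro q hq
    have h0 : Measure.map (f q) P (Set.Icc (0:ℝ) 1)ᶜ = 0 := by
      rw [hdist q hq]
      exact measure_mono_null (Set.compl_subset_compl.mpr Set.Ioo_subset_Icc_self)
        (betaMeasure_compl_Ioo _ _)
    rw [Measure.map_apply (hmeas q) measurableSet_Icc.compl] at h0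
    rw [ae_iff]
    exact h0
  have haeT : ∀ᵐ ω ∂P, (∏ q ∈ S, f q ω) ∈ Set.Icc (0:ℝ) 1 := by
    have hae : ∀ᵐ ω ∂P, ∀ q ∈ S, f q ω ∈ Set.Icc (0:ℝ) 1 :=
      (MeasureTheory.ae_ball_iff S.countable_toSet).mpr hae_each
    filter_upwards [hae] with ω hω
    exact ⟨Finset.prod_nonneg (fun q hq => (hω q hq).1),
      Finset.prod_le_one (fun q hq => (hω q hq).1) (fun q hq => (hω q hq).2)⟩
  constructor
  · rw [Measure.map_apply hTmeas measurableSet_Icc.compl]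
    exact ae_iff.mp haeT
  · intro n
    rw [integral_map hTmeas.aemeasurable (by fun_prop : Measurable fun x : ℝ => x ^ n).aestronglyMeasurable]
    have hcomp : iIndepFun
        (fun q ω => (f q ω) ^ n) P := by
      have := hindep.comp (fun _ (x : ℝ) => x ^ n) (fun _ => by fun_prop)
      exact this
    calc ∫ ω, (∏ q ∈ S, f q ω) ^ n ∂P
        = ∫ ω, ∏ q ∈ S, (f q ω) ^ n ∂P := by
          refine integral_congr_ae (Filter.Eventually.of_forall fun ω => ?_)
          simp only []
          rw [Finset.prod_pow]
      _ = ∏ q ∈ S, ∫ ω, (f q ω) ^ n ∂P :=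
          indep_prod_integral P _ hcomp (fun q => (hmeas q).pow_const n) S
      _ = ∏ q ∈ S, betaMoment (a q) (b q) n := by
          refine Finset.prod_congr rfl fun q hq => ?_
          rw [← integral_map (hmeas q).aemeasurable
            (by fun_prop : Measurable fun x : ℝ => x ^ n).aestronglyMeasurable,
            hdist q hq, betaMeasure_moment (ha q hq) (hb q hq)]

theorem stmt1 (d : ℕ) (hd : 2 ≤ d)
    {Ω : Type*} [MeasurableSpace Ω] (P : Measure Ω) [IsProbabilityMeasure P]
    (X : ℕ → ℕ → Ω → ℝ) (Y : ℕ → Ω → ℝ)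
    (hXindep : iIndepFun
      (fun p : {p : ℕ × ℕ // p.1 ≤ d - 2 ∧ p.1 ≤ p.2 ∧ p.2 ≤ d - 2} => X p.1.1 p.1.2) P)
    (hX : ∀ j i : ℕ, j ≤ d - 2 → j ≤ i → i ≤ d - 2 →
      HasBetaDist P (X j i) (1 + (i : ℝ) / 2) (1 / 2))
    (hYindep : iIndepFun
      (fun j : {j : ℕ // 1 ≤ j ∧ j ≤ d - 1} => Y j) P)
    (hY : ∀ j : ℕ, 1 ≤ j → j ≤ d - 1 →
      HasBetaDist P (Y j) (((j : ℝ) + 1) / 2) (((d : ℝ) - (j : ℝ)) / 2)) :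
    Measure.map (fun ω => ∏ j ∈ Finset.range (d - 1), ∏ i ∈ Finset.Icc j (d - 2), X j i ω) P
      = Measure.map (fun ω => ∏ j ∈ Finset.Icc 1 (d - 1), Y j ω) P := by
  classical
  -- LHS setup
  set A := (Finset.range (d-1)).sigma (fun j => Finset.Icc j (d-2)) with hA
  have gmem : ∀ x : {x // x ∈ A}, x.1.1 ≤ d - 2 ∧ x.1.1 ≤ x.1.2 ∧ x.1.2 ≤ d - 2 := by
    intro x
    have hx : x.1 ∈ (Finset.range (d-1)).sigma (fun j => Finset.Icc j (d-2)) := x.2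
    rw [Finset.mem_sigma, Finset.mem_range, Finset.mem_Icc] at hx
    exact ⟨by omega, hx.2.1, hx.2.2⟩
  set g : {x // x ∈ A} → {p : ℕ × ℕ // p.1 ≤ d - 2 ∧ p.1 ≤ p.2 ∧ p.2 ≤ d - 2} :=
    fun x => ⟨(x.1.1, x.1.2), gmem x⟩ with hg
  have ginj : Function.Injective g := by
    intro x y hxy
    have h1 : (x.1.1, x.1.2) = (y.1.1, y.1.2) := congrArg Subtype.val hxy
    simp only [Prod.mk.injEq] at h1
    refine Subtype.ext ?_
    obtain ⟨⟨x1, x2⟩, hx⟩ := x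
    obtain ⟨⟨y1, y2⟩, hy⟩ := y
    simp only at h1 ⊢
    exact Sigma.ext h1.1 (heq_of_eq h1.2)
  set S₁ := A.attach.image g with hS₁
  have hprod₁ : ∀ (h : ℕ → ℕ → ℝ), (∏ q ∈ S₁, h q.1.1 q.1.2)
      = ∏ j ∈ Finset.range (d-1), ∏ i ∈ Finset.Icc j (d-2), h j i := by
    intro h
    rw [hS₁, Finset.prod_image (fun x _ y _ hxy => ginj hxy)]
    have : ∀ x : {x // x ∈ A}, h (g x).1.1 (g x).1.2 = (fun p : Σ _ : ℕ, ℕ => h p.1 p.2) x.1 :=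
      fun x => rfl
    rw [Finset.prod_congr rfl (fun x _ => this x), Finset.prod_attach A
      (fun p : Σ _ : ℕ, ℕ => h p.1 p.2), hA, Finset.prod_sigma]
  -- RHS setup
  set B := Finset.Icc 1 (d-1) with hB
  have g2mem : ∀ x : {x // x ∈ B}, 1 ≤ x.1 ∧ x.1 ≤ d - 1 := by
    intro x
    have hx : x.1 ∈ Finset.Icc 1 (d-1) := x.2
    rwa [Finset.mem_Icc] at hx
  set g₂ : {x // x ∈ B} → {j : ℕ // 1 ≤ j ∧ j ≤ d - 1} := fun x => ⟨x.1, g2mem x⟩ with hg₂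
  have g₂inj : Function.Injective g₂ := by
    intro x y hxy
    have h1 : (g₂ x).1 = (g₂ y).1 := congrArg Subtype.val hxy
    exact Subtype.ext h1
  set S₂ := B.attach.image g₂ with hS₂
  have hprod₂ : ∀ (h : ℕ → ℝ), (∏ q ∈ S₂, h q.1) = ∏ j ∈ Finset.Icc 1 (d-1), h j := by
    intro h
    rw [hS₂, Finset.prod_image (fun x _ y _ hxy => g₂inj hxy)]
    rw [show (fun x : {x // x ∈ B} => h (g₂ x).1) = fun x => h x.1 from rfl]
    rw [Finset.prod_attach B (fun j => h j), hB]
  -- apply machinery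
  have hmeas₁ : ∀ q : {p : ℕ × ℕ // p.1 ≤ d - 2 ∧ p.1 ≤ p.2 ∧ p.2 ≤ d - 2},
      Measurable (X q.1.1 q.1.2) := fun q => (hX _ _ q.2.1 q.2.2.1 q.2.2.2).1
  have hmeas₂ : ∀ q : {j : ℕ // 1 ≤ j ∧ j ≤ d - 1}, Measurable (Y q.1) :=
    fun q => (hY _ q.2.1 q.2.2).1
  obtain ⟨hc₁, hm₁⟩ := map_prod_props P (fun q => X q.1.1 q.1.2) hXindep hmeas₁ S₁
    (fun q => 1 + (q.1.2 : ℝ)/2) (fun _ => (1:ℝ)/2)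
    (fun q _ => by positivity) (fun q _ => by norm_num)
    (fun q _ => (hX _ _ q.2.1 q.2.2.1 q.2.2.2).2)
  obtain ⟨hc₂, hm₂⟩ := map_prod_props P (fun q => Y q.1) hYindep hmeas₂ S₂
    (fun q => ((q.1 : ℝ) + 1)/2) (fun q => ((d : ℝ) - (q.1 : ℝ))/2)
    (fun q _ => by positivity)
    (fun q _ => by
      have h1 : q.1 < d := by have := q.2.2; omega
      have h2 : (q.1 : ℝ) < d := by exact_mod_cast h1
      linarith)
    (fun q _ => (hY _ q.2.1 q.2.2).2)
  have e₁ : (fun ω => ∏ j ∈ Finset.range (d - 1), ∏ i ∈ Finset.Icc j (d - 2), X j i ω)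
      = fun ω => ∏ q ∈ S₁, X q.1.1 q.1.2 ω := funext fun ω => (hprod₁ (fun j i => X j i ω)).symm
  have e₂ : (fun ω => ∏ j ∈ Finset.Icc 1 (d - 1), Y j ω)
      = fun ω => ∏ q ∈ S₂, Y q.1 ω := funext fun ω => (hprod₂ (fun j => Y j ω)).symm
  rw [e₁, e₂]
  have hT₁ : Measurable (fun ω => ∏ q ∈ S₁, X q.1.1 q.1.2 ω) :=
    Finset.measurable_prod S₁ (fun q _ => hmeas₁ q)
  have hT₂ : Measurable (fun ω => ∏ q ∈ S₂, Y q.1 ω) :=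
    Finset.measurable_prod S₂ (fun q _ => hmeas₂ q)
  haveI : IsProbabilityMeasure (Measure.map (fun ω => ∏ q ∈ S₁, X q.1.1 q.1.2 ω) P) :=
    Measure.isProbabilityMeasure_map hT₁.aemeasurable
  haveI : IsProbabilityMeasure (Measure.map (fun ω => ∏ q ∈ S₂, Y q.1 ω) P) :=
    Measure.isProbabilityMeasure_map hT₂.aemeasurable
  refine ext_of_moments _ _ hc₁ hc₂ fun n => ?_
  rw [hm₁ n, hm₂ n]
  rw [hprod₁ (fun j i => betaMoment (1 + (i:ℝ)/2) (1/2) n),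
    hprod₂ (fun j => betaMoment (((j:ℝ)+1)/2) (((d:ℝ)-(j:ℝ))/2) n)]
  exact moments_eq d hd n
end
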